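/- There exist δ > 0 and C > 0 such that for all α, β ∈ ℝ⁵ with |α| ≤ δ, |β| ≤ δ and every j ∈ {1,2,3,4,5}: ‖g_α − g_β‖ + ‖h_{α,j} − h_{β,j}‖ ≤ C |α − β|, where ‖u‖² := ‖u₁‖²_{H³(B⁵)} + ‖u₂‖²_{H²(B⁵)} for a pair u = (u₁,u₂), g_α(ξ) := ( A₀(α)(A₀(α) − A_k(α)ξ^k)^{−2}, 2A₀(α)²(A₀(α) − A_k(α)ξ^k)^{−3} ), and h_{α,j}(ξ) := ∂_{α^j} Ψ_α(ξ) is the partial derivative with respect to α^j of Ψ_α(ξ) := ( ψ_α(ξ), ξ^k ∂_{ξ^k} ψ_α(ξ) + ψ_α(ξ) ). -/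

import Mathlib

open MeasureTheory

noncomputable section

abbrev E5 : Type := EuclideanSpace ℝ (Fin 5)

/-- the partial derivative in the `i`-th coordinate direction -/
def pdR (i : Fin 5) (f : E5 → ℝ) : E5 → ℝ :=
  fun x => fderiv ℝ f x (EuclideanSpace.single i 1)

/-- the iterated partial derivative `∂^β` for a multi-index `β` -/
def pdMR (β : Fin 5 → ℕ) (f : E5 → ℝ) : E5 → ℝ :=
  (List.finRange 5).foldr (fun i g => (pdR i)^[β i] g) f

/-- the open unit ball `B⁵ ⊆ ℝ⁵` -/
def ball5 : Set E5 := Metric.ball 0 1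

/-- the squared `L²` norm over the unit ball -/
def bL2SqR (f : E5 → ℝ) : ℝ := ∫ x in ball5, ‖f x‖ ^ 2

/-- the squared `H^m(B⁵)` norm: `∑_{|β| ≤ m} ‖∂^β f‖²_{L²(B⁵)}` -/
def HSqR (m : ℕ) (f : E5 → ℝ) : ℝ :=
  ∑ β : Fin 5 → Fin (m + 1),
    if (∑ i, (β i : ℕ)) ≤ m then bL2SqR (pdMR (fun i => (β i : ℕ)) f) else 0

/-- `A₀(α) = cosh(α⁵)···cosh(α¹)` -/
def A0 (α : E5) : ℝ := ∏ k, Real.cosh (α k)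

/-- `A_j(α) = cosh(α⁵)···cosh(α^{j+1}) sinh(α^j)` -/
def Ac (α : E5) (j : Fin 5) : ℝ :=
  (∏ k ∈ Finset.Ioi j, Real.cosh (α k)) * Real.sinh (α j)

/-- `ψ_α(ξ) = √2 / (A₀(α) − A_j(α)ξ^j)` -/
def psiA (α : E5) (ξ : E5) : ℝ :=
  Real.sqrt 2 / (A0 α - ∑ j, Ac α j * ξ j)

/-- first component of the eigenfunction `g_α` (eigenvalue 1) -/
def g1 (α : E5) (ξ : E5) : ℝ := A0 α / (A0 α - ∑ k, Ac α k * ξ k) ^ 2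

/-- second component of the eigenfunction `g_α` (eigenvalue 1) -/
def g2 (α : E5) (ξ : E5) : ℝ := 2 * (A0 α) ^ 2 / (A0 α - ∑ k, Ac α k * ξ k) ^ 3

/-- first component of `h_{α,j} = ∂_{α^j} Ψ_α`, where `Ψ_α = (ψ_α, ξ^k∂_kψ_α + ψ_α)` -/
def h1 (α : E5) (j : Fin 5) (ξ : E5) : ℝ :=
  fderiv ℝ (fun a : E5 => psiA a ξ) α (EuclideanSpace.single j 1)

/-- second component of `h_{α,j} = ∂_{α^j} Ψ_α`, where `Ψ_α = (ψ_α, ξ^k∂_kψ_α + ψ_α)` -/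
def h2 (α : E5) (j : Fin 5) (ξ : E5) : ℝ :=
  fderiv ℝ (fun a : E5 => (∑ k, ξ k * pdR k (psiA a) ξ) + psiA a ξ) α
    (EuclideanSpace.single j 1)

set_option maxHeartbeats 1000000

open scoped ContDiff
open Metric Set

lemma coord_abs_le_norm (x : E5) (k : Fin 5) : |x k| ≤ ‖x‖ := by
  rw [EuclideanSpace.norm_eq]
  rw [← Real.sqrt_sq_eq_abs]
  apply Real.sqrt_le_sqrt
  have : |x k| ^ 2 ≤ ∑ i, |x i| ^ 2 :=
    Finset.single_le_sum (f := fun i => |x i| ^ 2) (fun i _ => by positivity) (Finset.mem_univ k)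
  simpa [sq_abs] using this

lemma cd_coord (k : Fin 5) : ContDiff ℝ ∞ (fun x : E5 => x k) :=
  (EuclideanSpace.proj (𝕜 := ℝ) k).contDiff

lemma cd_A0 : ContDiff ℝ ∞ A0 := by
  unfold A0
  exact contDiff_prod fun k _ => Real.contDiff_cosh.comp (cd_coord k)

lemma cd_Ac (j : Fin 5) : ContDiff ℝ ∞ (fun a => Ac a j) := by
  unfold Ac
  exact (contDiff_prod fun k _ => Real.contDiff_cosh.comp (cd_coord k)).mul
    (Real.contDiff_sinh.comp (cd_coord j))

/-- the denominator -/
def Dfn (a ξ : E5) : ℝ := A0 a - ∑ j, Ac a j * ξ j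

lemma cd_Dfn : ContDiff ℝ ∞ (fun q : E5 × E5 => Dfn q.1 q.2) := by
  unfold Dfn
  exact (cd_A0.comp contDiff_fst).sub
    (ContDiff.sum fun j _ => ((cd_Ac j).comp contDiff_fst).mul ((cd_coord j).comp contDiff_snd))

def V : Set (E5 × E5) := {q | 0 < Dfn q.1 q.2}

lemma isOpen_V : IsOpen V :=
  isOpen_lt continuous_const (cd_Dfn.continuous)

lemma one_le_A0 (a : E5) : 1 ≤ A0 a := by
  unfold A0
  calc (1:ℝ) = ∏ _k : Fin 5, 1 := by simp
  _ ≤ ∏ k, Real.cosh (a k) :=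
      Finset.prod_le_prod (by simp) (fun k _ => Real.one_le_cosh _)

lemma cosh_le_exp_abs (x : ℝ) : Real.cosh x ≤ Real.exp |x| := by
  rw [Real.cosh_eq]
  have h1 : Real.exp x ≤ Real.exp |x| := Real.exp_le_exp.2 (le_abs_self x)
  have h2 : Real.exp (-x) ≤ Real.exp |x| := Real.exp_le_exp.2 (neg_le_abs x)
  linarith

lemma sinh_le_mul_exp (t : ℝ) : Real.sinh t ≤ t * Real.exp t := by
  rw [Real.sinh_eq]
  have h1 := Real.add_one_le_exp (-2*t)
  have h2 : Real.exp (-2*t) = Real.exp (-t) * Real.exp (-t) := by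
    rw [← Real.exp_add]; ring_nf
  have h3 : Real.exp (-t) * Real.exp t = 1 := by
    rw [← Real.exp_add]; simp
  nlinarith [Real.exp_pos t, Real.exp_pos (-t)]

lemma abs_Ac_le (a : E5) (j : Fin 5) (ha : ‖a‖ ≤ 1/20) :
    |Ac a j| ≤ (1/20) * Real.exp (1/4) := by
  have hak : ∀ k, |a k| ≤ 1/20 := fun k => (coord_abs_le_norm a k).trans ha
  have hcosh : ∀ k : Fin 5, Real.cosh (a k) ≤ Real.exp (1/20) := fun k =>
    (cosh_le_exp_abs _).trans (Real.exp_le_exp.2 (hak k))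
  have hsinh : |Real.sinh (a j)| ≤ (1/20) * Real.exp (1/20) := by
    rw [Real.abs_sinh]
    calc Real.sinh |a j| ≤ |a j| * Real.exp |a j| := sinh_le_mul_exp _
    _ ≤ (1/20) * Real.exp (1/20) :=
        mul_le_mul (hak j) (Real.exp_le_exp.2 (hak j)) (Real.exp_nonneg _) (by norm_num)
  unfold Ac
  rw [abs_mul]
  have hprod : |∏ k ∈ Finset.Ioi j, Real.cosh (a k)| ≤ Real.exp (1/20) ^ 4 := by
    rw [Finset.abs_prod]
    calc ∏ k ∈ Finset.Ioi j, |Real.cosh (a k)|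
        ≤ ∏ _k ∈ Finset.Ioi j, Real.exp (1/20) :=
          Finset.prod_le_prod (fun k _ => abs_nonneg _)
            (fun k _ => by rw [abs_of_pos (Real.cosh_pos _)]; exact hcosh k)
    _ = Real.exp (1/20) ^ (Finset.Ioi j).card := by rw [Finset.prod_const]
    _ ≤ Real.exp (1/20) ^ 4 := by
        apply pow_le_pow_right₀ (Real.one_le_exp (by norm_num))
        rw [Fin.card_Ioi]; omega
  calc |∏ k ∈ Finset.Ioi j, Real.cosh (a k)| * |Real.sinh (a j)|
      ≤ Real.exp (1/20) ^ 4 * ((1/20) * Real.exp (1/20)) :=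
        mul_le_mul hprod hsinh (abs_nonneg _) (by positivity)
  _ = (1/20) * (Real.exp (1/20) * Real.exp (1/20) ^ 4) := by ring
  _ = (1/20) * Real.exp (1/4) := by
      rw [← Real.exp_nat_mul, ← Real.exp_add]; norm_num

lemma Dfn_pos (a ξ : E5) (ha : ‖a‖ ≤ 1/20) (hx : ‖ξ‖ ≤ 1) : (1:ℝ)/4 ≤ Dfn a ξ := by
  have hxk : ∀ k, |ξ k| ≤ 1 := fun k => (coord_abs_le_norm ξ k).trans hx
  have hAc := fun j => abs_Ac_le a j ha
  have hexp : Real.exp (1/4) ≤ 2.72 := by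
    calc Real.exp (1/4) ≤ Real.exp 1 := Real.exp_le_exp.2 (by norm_num)
    _ ≤ 2.72 := (Real.exp_one_lt_d9).le.trans (by norm_num)
  have hsum : |∑ j, Ac a j * ξ j| ≤ 5 * ((1/20) * Real.exp (1/4)) := by
    calc |∑ j, Ac a j * ξ j| ≤ ∑ j, |Ac a j * ξ j| := Finset.abs_sum_le_sum_abs _ _
    _ ≤ ∑ _j : Fin 5, (1/20) * Real.exp (1/4) := by
        apply Finset.sum_le_sum
        intro j _
        rw [abs_mul]
        calc |Ac a j| * |ξ j| ≤ ((1/20) * Real.exp (1/4)) * 1 :=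
          mul_le_mul (hAc j) (hxk j) (abs_nonneg _) (by positivity)
        _ = (1/20) * Real.exp (1/4) := by ring
    _ = 5 * ((1/20) * Real.exp (1/4)) := by rw [Finset.sum_const]; simp
  have hA0 := one_le_A0 a
  unfold Dfn
  have := abs_le.1 hsum
  nlinarith


section DxiMachinery

variable {Pp : Type*} [NormedAddCommGroup Pp] [NormedSpace ℝ Pp]

/-- derivative of a two-variable function in a `ξ`-coordinate direction -/
def dxi (i : Fin 5) (G : Pp × E5 → ℝ) : Pp × E5 → ℝ :=
  fun q => fderiv ℝ G q (0, EuclideanSpace.single i 1)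

lemma one_le_inf : (1 : WithTop ℕ∞) ≤ ∞ := by
  exact_mod_cast le_top

lemma cdOn_dxi {U : Set (Pp × E5)} (hU : IsOpen U) {G : Pp × E5 → ℝ}
    (hG : ContDiffOn ℝ ∞ G U) (i : Fin 5) : ContDiffOn ℝ ∞ (dxi i G) U := by
  have h1 : ContDiffOn ℝ ∞ (fun q => fderiv ℝ G q) U :=
    hG.fderiv_of_isOpen hU (le_of_eq rfl)
  exact h1.clm_apply contDiffOn_const

lemma slice_fderiv {U : Set (Pp × E5)} (hU : IsOpen U) {G : Pp × E5 → ℝ}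
    (hG : ContDiffOn ℝ ∞ G U) {p : Pp} {f : E5 → ℝ}
    (hf : ∀ ξ', (p, ξ') ∈ U → f ξ' = G (p, ξ')) (i : Fin 5)
    {ξ : E5} (hq : (p, ξ) ∈ U) :
    pdR i f ξ = dxi i G (p, ξ) := by
  have hsl : IsOpen {ξ' : E5 | (p, ξ') ∈ U} := hU.preimage (Continuous.prodMk_right p)
  have hev : f =ᶠ[nhds ξ] fun ξ' => G (p, ξ') := by
    filter_upwards [hsl.mem_nhds hq] with ξ' h using hf ξ' h
  have hdiff : DifferentiableAt ℝ G (p, ξ) :=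
    (hG.differentiableOn (by simp)).differentiableAt (hU.mem_nhds hq)
  have hcomp : HasFDerivAt (fun ξ' => G (p, ξ'))
      ((fderiv ℝ G (p, ξ)).comp ((0 : E5 →L[ℝ] Pp).prod (ContinuousLinearMap.id ℝ E5))) ξ :=
    hdiff.hasFDerivAt.comp ξ (HasFDerivAt.prodMk (hasFDerivAt_const p ξ) (hasFDerivAt_id ξ))
  unfold pdR dxi
  rw [hev.fderiv_eq, hcomp.fderiv]
  simp

lemma rep_iter {U : Set (Pp × E5)} (hU : IsOpen U) (i : Fin 5) (n : ℕ) :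
    ∀ (G : Pp × E5 → ℝ), ContDiffOn ℝ ∞ G U → ∀ (f : E5 → ℝ) (p : Pp),
      (∀ ξ', (p, ξ') ∈ U → f ξ' = G (p, ξ')) →
      ∀ ξ, (p, ξ) ∈ U → (pdR i)^[n] f ξ = (dxi i)^[n] G (p, ξ) := by
  induction n with
  | zero => intro G _ f p hf ξ hq; simpa using hf ξ hq
  | succ n ih =>
      intro G hG f p hf ξ hq
      rw [Function.iterate_succ_apply, Function.iterate_succ_apply]
      exact ih (dxi i G) (cdOn_dxi hU hG i) (pdR i f) p
        (fun ξ' hq' => slice_fderiv hU hG hf i hq') ξ hq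

lemma cdOn_dxi_iter {U : Set (Pp × E5)} (hU : IsOpen U) (i : Fin 5) (n : ℕ)
    {G : Pp × E5 → ℝ} (hG : ContDiffOn ℝ ∞ G U) : ContDiffOn ℝ ∞ ((dxi i)^[n] G) U := by
  induction n with
  | zero => exact hG
  | succ n ih => rw [Function.iterate_succ_apply']; exact cdOn_dxi hU ih i

lemma cdOn_foldr {U : Set (Pp × E5)} (hU : IsOpen U) (β : Fin 5 → ℕ) (l : List (Fin 5)) :
    ∀ {G : Pp × E5 → ℝ}, ContDiffOn ℝ ∞ G U →
      ContDiffOn ℝ ∞ (l.foldr (fun i H => (dxi i)^[β i] H) G) U := by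
  induction l with
  | nil => intro G hG; exact hG
  | cons i l ih => intro G hG; exact cdOn_dxi_iter hU i (β i) (ih hG)

lemma rep_foldr {U : Set (Pp × E5)} (hU : IsOpen U) (β : Fin 5 → ℕ) (l : List (Fin 5)) :
    ∀ (G : Pp × E5 → ℝ), ContDiffOn ℝ ∞ G U → ∀ (f : E5 → ℝ) (p : Pp),
      (∀ ξ', (p, ξ') ∈ U → f ξ' = G (p, ξ')) →
      ∀ ξ, (p, ξ) ∈ U →
        (l.foldr (fun i g => (pdR i)^[β i] g) f) ξ =
          (l.foldr (fun i H => (dxi i)^[β i] H) G) (p, ξ) := by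
  induction l with
  | nil => intro G _ f p hf ξ hq; exact hf ξ hq
  | cons i l ih =>
      intro G hG f p hf ξ hq
      simp only [List.foldr_cons]
      exact rep_iter hU i (β i) (l.foldr (fun i H => (dxi i)^[β i] H) G)
        (cdOn_foldr hU β l hG) (l.foldr (fun i g => (pdR i)^[β i] g) f) p
        (fun ξ' hq' => ih G hG f p hf ξ' hq') ξ hq

lemma rep_pdMR {U : Set (Pp × E5)} (hU : IsOpen U) (β : Fin 5 → ℕ)
    {G : Pp × E5 → ℝ} (hG : ContDiffOn ℝ ∞ G U) {f : E5 → ℝ} {p : Pp}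
    (hf : ∀ ξ', (p, ξ') ∈ U → f ξ' = G (p, ξ')) {ξ : E5} (hq : (p, ξ) ∈ U) :
    pdMR β f ξ = ((List.finRange 5).foldr (fun i H => (dxi i)^[β i] H) G) (p, ξ) :=
  rep_foldr hU β (List.finRange 5) G hG f p hf ξ hq

end DxiMachinery

/-! Part 3: the open set `U2`, compact `K2`, MVT bound, integral bound. -/

def V2 : Set (E5 × E5) := {q | (0:ℝ) < Dfn q.1 q.2}

lemma isOpen_V2 : IsOpen V2 := isOpen_lt continuous_const cd_Dfn.continuous

/-- projection `((α,β),ξ) ↦ (α,ξ)` -/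
def peA : ((E5 × E5) × E5) →L[ℝ] (E5 × E5) :=
  ((ContinuousLinearMap.fst ℝ E5 E5).comp (ContinuousLinearMap.fst ℝ (E5 × E5) E5)).prod
    (ContinuousLinearMap.snd ℝ (E5 × E5) E5)

/-- projection `((α,β),ξ) ↦ (β,ξ)` -/
def peB : ((E5 × E5) × E5) →L[ℝ] (E5 × E5) :=
  ((ContinuousLinearMap.snd ℝ E5 E5).comp (ContinuousLinearMap.fst ℝ (E5 × E5) E5)).prod
    (ContinuousLinearMap.snd ℝ (E5 × E5) E5)

lemma peA_apply (q : (E5 × E5) × E5) : peA q = (q.1.1, q.2) := rfl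
lemma peB_apply (q : (E5 × E5) × E5) : peB q = (q.1.2, q.2) := rfl

def U2 : Set ((E5 × E5) × E5) := peA ⁻¹' V2 ∩ peB ⁻¹' V2

lemma isOpen_U2 : IsOpen U2 :=
  (isOpen_V2.preimage peA.continuous).inter (isOpen_V2.preimage peB.continuous)

lemma mem_V2 {α ξ : E5} (ha : ‖α‖ ≤ 1/20) (hx : ‖ξ‖ ≤ 1) : (α, ξ) ∈ V2 :=
  lt_of_lt_of_le (by norm_num) (Dfn_pos α ξ ha hx)

lemma mem_U2 {α β ξ : E5} (ha : ‖α‖ ≤ 1/20) (hb : ‖β‖ ≤ 1/20) (hx : ‖ξ‖ ≤ 1) :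
    ((α, β), ξ) ∈ U2 :=
  ⟨mem_V2 ha hx, mem_V2 hb hx⟩

lemma lip_of_smooth {G : (E5 × E5) × E5 → ℝ} (hG : ContDiffOn ℝ ∞ G U2) :
    ∃ L : ℝ, 0 ≤ L ∧ ∀ p q : E5 × E5, ‖p‖ ≤ 1/20 → ‖q‖ ≤ 1/20 → ∀ ξ : E5, ‖ξ‖ ≤ 1 →
      |G (p, ξ) - G (q, ξ)| ≤ L * ‖p - q‖ := by
  have hfd : ContDiffOn ℝ ∞ (fun q => fderiv ℝ G q) U2 :=
    hG.fderiv_of_isOpen isOpen_U2 (le_of_eq rfl)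
  have hK : IsCompact ((Metric.closedBall (0 : E5 × E5) (1/20)) ×ˢ
      (Metric.closedBall (0 : E5) 1)) :=
    (isCompact_closedBall _ _).prod (isCompact_closedBall _ _)
  have hKU : ((Metric.closedBall (0 : E5 × E5) (1/20)) ×ˢ
      (Metric.closedBall (0 : E5) 1)) ⊆ U2 := by
    rintro ⟨p, ξ⟩ ⟨hp, hx⟩
    rw [Metric.mem_closedBall, dist_zero_right] at hp hx
    exact mem_U2 ((norm_fst_le p).trans hp) ((norm_snd_le p).trans hp) hx
  obtain ⟨C, hC⟩ := hK.exists_bound_of_continuousOn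
    ((hfd.continuousOn).mono hKU)
  refine ⟨max C 0, le_max_right _ _, ?_⟩
  intro p q hp hq ξ hx
  have hxball : ξ ∈ Metric.closedBall (0 : E5) 1 := by
    rwa [Metric.mem_closedBall, dist_zero_right]
  set s : Set (E5 × E5) := Metric.closedBall 0 (1/20) with hs
  have hps : p ∈ s := by rwa [Metric.mem_closedBall, dist_zero_right]
  have hqs : q ∈ s := by rwa [Metric.mem_closedBall, dist_zero_right]
  set f' : (E5 × E5) → (E5 × E5) →L[ℝ] ℝ := fun r =>
    (fderiv ℝ G (r, ξ)).comp
      ((ContinuousLinearMap.id ℝ (E5 × E5)).prod (0 : (E5 × E5) →L[ℝ] E5)) with hf'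
  have key : ∀ r ∈ s, HasFDerivWithinAt (fun r' : E5 × E5 => G (r', ξ)) (f' r) s r := by
    intro r hr
    have hrs : ‖r‖ ≤ 1/20 := by rwa [Metric.mem_closedBall, dist_zero_right] at hr
    have hrU : (r, ξ) ∈ U2 := hKU ⟨hr, hxball⟩
    have hdiff : DifferentiableAt ℝ G (r, ξ) :=
      (hG.differentiableOn (by simp)).differentiableAt (isOpen_U2.mem_nhds hrU)
    exact (hdiff.hasFDerivAt.comp r
      (HasFDerivAt.prodMk (hasFDerivAt_id r) (hasFDerivAt_const ξ r))).hasFDerivWithinAt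
  have bound : ∀ r ∈ s, ‖f' r‖ ≤ max C 0 := by
    intro r hr
    have hrU : (r, ξ) ∈ (Metric.closedBall (0 : E5 × E5) (1/20)) ×ˢ
        (Metric.closedBall (0 : E5) 1) := ⟨hr, hxball⟩
    have h1 : ‖fderiv ℝ G (r, ξ)‖ ≤ C := hC _ hrU
    apply ContinuousLinearMap.opNorm_le_bound _ (le_max_right C 0)
    intro v
    have hval : f' r v = fderiv ℝ G (r, ξ) (v, 0) := rfl
    rw [hval]
    calc ‖fderiv ℝ G (r, ξ) (v, 0)‖ ≤ ‖fderiv ℝ G (r, ξ)‖ * ‖((v, 0) : (E5 × E5) × E5)‖ :=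
          ContinuousLinearMap.le_opNorm _ _
    _ ≤ max C 0 * ‖((v, 0) : (E5 × E5) × E5)‖ := by
        apply mul_le_mul_of_nonneg_right (h1.trans (le_max_left C 0)) (norm_nonneg _)
    _ = max C 0 * ‖v‖ := by
        congr 1
        rw [Prod.norm_def]
        simp [norm_nonneg]
  have := Convex.norm_image_sub_le_of_norm_hasFDerivWithin_le key bound
    (convex_closedBall (0 : E5 × E5) (1/20)) hqs hps
  simpa [Real.norm_eq_abs] using this

lemma ball5_measure_lt_top : volume ball5 < ⊤ := by
  unfold ball5
  exact measure_ball_lt_top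

lemma bL2_le (u : E5 → ℝ) (M : ℝ) (hb : ∀ ξ ∈ ball5, |u ξ| ≤ M) :
    bL2SqR u ≤ M ^ 2 * (volume ball5).toReal := by
  unfold bL2SqR
  have key : ‖∫ x in ball5, ‖u x‖ ^ 2‖ ≤ M ^ 2 * (volume ball5).toReal := by
    apply norm_setIntegral_le_of_norm_le_const_ae' ball5_measure_lt_top
    filter_upwards with x hx
    have := hb x hx
    rw [Real.norm_eq_abs, abs_of_nonneg (by positivity)]
    rw [Real.norm_eq_abs]
    nlinarith [abs_nonneg (u x), sq_abs (u x)]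
  exact (le_abs_self _).trans key

lemma pdR_zero (i : Fin 5) : pdR i (fun _ => (0:ℝ)) = fun _ => 0 := by
  funext x
  unfold pdR
  rw [fderiv_const_apply]
  rfl

lemma pdMR_zero (β : Fin 5 → ℕ) (ξ : E5) : pdMR β (fun _ => (0:ℝ)) ξ = 0 := by
  have h : ∀ l : List (Fin 5),
      (l.foldr (fun i g => (pdR i)^[β i] g) (fun _ => (0:ℝ))) = fun _ => 0 := by
    intro l
    induction l with
    | nil => rfl
    | cons i l ih =>
        simp only [List.foldr_cons, ih]
        exact Function.iterate_fixed (pdR_zero i) _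
  unfold pdMR
  rw [h]

lemma norm_pair_sub (α β : E5) : ‖((α, β) : E5 × E5) - (β, β)‖ = ‖α - β‖ := by
  rw [Prod.norm_def]
  simp [norm_nonneg]

lemma main_bound {F : (E5 × E5) × E5 → ℝ} (hF : ContDiffOn ℝ ∞ F U2)
    (hdiag : ∀ γ ξ : E5, F ((γ, γ), ξ) = 0) (m : ℕ) :
    ∃ L : ℝ, 0 < L ∧ ∀ α β : E5, ‖α‖ ≤ 1/20 → ‖β‖ ≤ 1/20 →
      HSqR m (fun ξ => F ((α, β), ξ)) ≤ L * ‖α - β‖ ^ 2 := by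
  have H : ∀ b : Fin 5 → Fin (m + 1), ∃ L : ℝ, 0 ≤ L ∧
      ∀ p q : E5 × E5, ‖p‖ ≤ 1/20 → ‖q‖ ≤ 1/20 → ∀ ξ : E5, ‖ξ‖ ≤ 1 →
        |((List.finRange 5).foldr (fun i H => (dxi i)^[(b i : ℕ)] H) F) (p, ξ) -
          ((List.finRange 5).foldr (fun i H => (dxi i)^[(b i : ℕ)] H) F) (q, ξ)| ≤
            L * ‖p - q‖ :=
    fun b => lip_of_smooth (cdOn_foldr isOpen_U2 (fun i => (b i : ℕ)) _ hF)
  choose Lf hLf0 hLf using H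
  refine ⟨(∑ b : Fin 5 → Fin (m + 1), (Lf b) ^ 2) * (volume ball5).toReal + 1, ?_, ?_⟩
  · have h1 : 0 ≤ (∑ b : Fin 5 → Fin (m + 1), (Lf b) ^ 2) * (volume ball5).toReal := by
      apply mul_nonneg (Finset.sum_nonneg fun b _ => sq_nonneg _) ENNReal.toReal_nonneg
    linarith
  intro α β ha hb
  have key : ∀ b : Fin 5 → Fin (m + 1),
      bL2SqR (pdMR (fun i => (b i : ℕ)) (fun ξ => F ((α, β), ξ))) ≤
        (Lf b) ^ 2 * (volume ball5).toReal * ‖α - β‖ ^ 2 := by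
    intro b
    have hbd : ∀ ξ ∈ ball5, |pdMR (fun i => (b i : ℕ)) (fun ξ => F ((α, β), ξ)) ξ| ≤
        Lf b * ‖α - β‖ := by
      intro ξ hξ
      have hx1 : ‖ξ‖ ≤ 1 := by
        have : dist ξ 0 < 1 := hξ
        rw [dist_zero_right] at this
        exact this.le
      have hq : ((α, β), ξ) ∈ U2 := mem_U2 ha hb hx1
      have hq' : ((β, β), ξ) ∈ U2 := mem_U2 hb hb hx1
      have hrep : pdMR (fun i => (b i : ℕ)) (fun ξ => F ((α, β), ξ)) ξ =
          ((List.finRange 5).foldr (fun i H => (dxi i)^[(b i : ℕ)] H) F) ((α, β), ξ) :=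
        rep_pdMR isOpen_U2 _ hF (fun ξ' _ => rfl) hq
      have hzero : ((List.finRange 5).foldr (fun i H => (dxi i)^[(b i : ℕ)] H) F)
          ((β, β), ξ) = 0 := by
        have := rep_pdMR isOpen_U2 (fun i => (b i : ℕ)) hF
          (f := fun _ => (0:ℝ)) (p := ((β, β) : E5 × E5))
          (fun ξ' _ => (hdiag β ξ').symm) hq'
        rw [← this, pdMR_zero]
      rw [hrep]
      calc |((List.finRange 5).foldr (fun i H => (dxi i)^[(b i : ℕ)] H) F) ((α, β), ξ)|
          = |((List.finRange 5).foldr (fun i H => (dxi i)^[(b i : ℕ)] H) F) ((α, β), ξ) -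
            ((List.finRange 5).foldr (fun i H => (dxi i)^[(b i : ℕ)] H) F) ((β, β), ξ)| := by
            rw [hzero, sub_zero]
      _ ≤ Lf b * ‖((α, β) : E5 × E5) - (β, β)‖ := by
          apply hLf b (α, β) (β, β) _ _ ξ hx1
          · rw [Prod.norm_def]
            simp only [max_le_iff]
            constructor <;> [skip; skip] <;> norm_num [ha, hb]
          · rw [Prod.norm_def]
            simp only [max_le_iff]
            constructor <;> norm_num [hb]
      _ = Lf b * ‖α - β‖ := by rw [norm_pair_sub]
    calc bL2SqR (pdMR (fun i => (b i : ℕ)) (fun ξ => F ((α, β), ξ)))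
        ≤ (Lf b * ‖α - β‖) ^ 2 * (volume ball5).toReal := bL2_le _ _ hbd
    _ = (Lf b) ^ 2 * (volume ball5).toReal * ‖α - β‖ ^ 2 := by ring
  unfold HSqR
  calc (∑ b : Fin 5 → Fin (m + 1), if (∑ i, (b i : ℕ)) ≤ m then
        bL2SqR (pdMR (fun i => (b i : ℕ)) (fun ξ => F ((α, β), ξ))) else 0)
      ≤ ∑ b : Fin 5 → Fin (m + 1), (Lf b) ^ 2 * (volume ball5).toReal * ‖α - β‖ ^ 2 := by
        apply Finset.sum_le_sum
        intro b _
        split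
        · exact key b
        · positivity
  _ = (∑ b : Fin 5 → Fin (m + 1), (Lf b) ^ 2) * (volume ball5).toReal * ‖α - β‖ ^ 2 := by
      rw [Finset.sum_mul, Finset.sum_mul]
  _ ≤ ((∑ b : Fin 5 → Fin (m + 1), (Lf b) ^ 2) * (volume ball5).toReal + 1) * ‖α - β‖ ^ 2 := by
      apply mul_le_mul_of_nonneg_right _ (sq_nonneg _)
      linarith

/-! Part 5: concrete functions and their smoothness on `U2`. -/

/-- `ψ` as a function on pairs -/
def psiV : E5 × E5 → ℝ := fun v => psiA v.1 v.2

lemma cdOn_Dfn_V2 : ContDiffOn ℝ ∞ (fun v : E5 × E5 => Dfn v.1 v.2) V2 :=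
  cd_Dfn.contDiffOn

lemma Dfn_ne_zero_V2 : ∀ v ∈ V2, Dfn v.1 v.2 ≠ 0 := fun _ hv => ne_of_gt hv

lemma cdOn_psiV : ContDiffOn ℝ ∞ psiV V2 := by
  have : ContDiffOn ℝ ∞ (fun v : E5 × E5 => Real.sqrt 2 / Dfn v.1 v.2) V2 :=
    ContDiffOn.div contDiffOn_const cdOn_Dfn_V2 Dfn_ne_zero_V2
  exact this.congr fun v _ => rfl

lemma cdOn_g1V : ContDiffOn ℝ ∞ (fun v : E5 × E5 => g1 v.1 v.2) V2 := by
  have : ContDiffOn ℝ ∞ (fun v : E5 × E5 => A0 v.1 / (Dfn v.1 v.2) ^ 2) V2 :=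
    ContDiffOn.div ((cd_A0.comp contDiff_fst).contDiffOn) (cdOn_Dfn_V2.pow 2)
      (fun v hv => pow_ne_zero 2 (Dfn_ne_zero_V2 v hv))
  exact this.congr fun v _ => rfl

lemma cdOn_g2V : ContDiffOn ℝ ∞ (fun v : E5 × E5 => g2 v.1 v.2) V2 := by
  have : ContDiffOn ℝ ∞ (fun v : E5 × E5 => 2 * (A0 v.1) ^ 2 / (Dfn v.1 v.2) ^ 3) V2 :=
    ContDiffOn.div (contDiffOn_const.mul (((cd_A0.comp contDiff_fst).pow 2).contDiffOn))
      (cdOn_Dfn_V2.pow 3) (fun v hv => pow_ne_zero 3 (Dfn_ne_zero_V2 v hv))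
  exact this.congr fun v _ => rfl

/-- derivative of a two-variable function in a parameter-coordinate direction -/
def dpj (j : Fin 5) (G : E5 × E5 → ℝ) : E5 × E5 → ℝ :=
  fun q => fderiv ℝ G q (EuclideanSpace.single j 1, 0)

lemma cdOn_dpj {U : Set (E5 × E5)} (hU : IsOpen U) {G : E5 × E5 → ℝ}
    (hG : ContDiffOn ℝ ∞ G U) (j : Fin 5) : ContDiffOn ℝ ∞ (dpj j G) U := by
  have h1 : ContDiffOn ℝ ∞ (fun q => fderiv ℝ G q) U :=
    hG.fderiv_of_isOpen hU (le_of_eq rfl)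
  exact h1.clm_apply contDiffOn_const

lemma slice_fderiv_param {U : Set (E5 × E5)} (hU : IsOpen U) {G : E5 × E5 → ℝ}
    (hG : ContDiffOn ℝ ∞ G U) {ξ : E5} {f : E5 → ℝ}
    (hf : ∀ a', (a', ξ) ∈ U → f a' = G (a', ξ)) (j : Fin 5)
    {a : E5} (ha : (a, ξ) ∈ U) :
    fderiv ℝ f a (EuclideanSpace.single j 1) = dpj j G (a, ξ) := by
  have hsl : IsOpen {a' : E5 | (a', ξ) ∈ U} := hU.preimage (continuous_id.prodMk continuous_const)
  have hev : f =ᶠ[nhds a] fun a' => G (a', ξ) := by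
    filter_upwards [hsl.mem_nhds ha] with a' h using hf a' h
  have hdiff : DifferentiableAt ℝ G (a, ξ) :=
    (hG.differentiableOn (by simp)).differentiableAt (hU.mem_nhds ha)
  have hcomp : HasFDerivAt (fun a' => G (a', ξ))
      ((fderiv ℝ G (a, ξ)).comp ((ContinuousLinearMap.id ℝ E5).prod (0 : E5 →L[ℝ] E5))) a :=
    hdiff.hasFDerivAt.comp a (HasFDerivAt.prodMk (hasFDerivAt_id a) (hasFDerivAt_const ξ a))
  rw [hev.fderiv_eq, hcomp.fderiv]
  simp [dpj]

/-- representation of `h1` on `V2` -/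
lemma h1_rep {a ξ : E5} (ha : (a, ξ) ∈ V2) (j : Fin 5) :
    h1 a j ξ = dpj j psiV (a, ξ) := by
  unfold h1
  exact slice_fderiv_param isOpen_V2 cdOn_psiV (fun a' _ => rfl) j ha

/-- the function inside the `α`-derivative defining `h2`, as a two-variable function -/
def W2 : E5 × E5 → ℝ := fun v => (∑ k, v.2 k * dxi k psiV v) + psiV v

lemma cdOn_W2 : ContDiffOn ℝ ∞ W2 V2 := by
  apply ContDiffOn.add _ cdOn_psiV
  apply ContDiffOn.sum
  intro k _
  exact (((cd_coord k).comp contDiff_snd).contDiffOn).mul (cdOn_dxi isOpen_V2 cdOn_psiV k)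

/-- representation of `h2` on `V2` -/
lemma h2_rep {a ξ : E5} (ha : (a, ξ) ∈ V2) (j : Fin 5) :
    h2 a j ξ = dpj j W2 (a, ξ) := by
  unfold h2
  apply slice_fderiv_param isOpen_V2 cdOn_W2 _ j ha
  intro a' ha'
  unfold W2
  congr 1
  apply Finset.sum_congr rfl
  intro k _
  congr 1
  exact slice_fderiv isOpen_V2 cdOn_psiV (fun ξ' _ => rfl) k ha'

/-! Part 6: smoothness of the four difference functions on `U2`, and final theorem. -/

lemma cdOn_Fg1 : ContDiffOn ℝ ∞ (fun q : (E5 × E5) × E5 => g1 q.1.1 q.2 - g1 q.1.2 q.2) U2 := by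
  have hA : ContDiffOn ℝ ∞ ((fun v : E5 × E5 => g1 v.1 v.2) ∘ peA) U2 :=
    cdOn_g1V.comp peA.contDiff.contDiffOn Set.inter_subset_left
  have hB : ContDiffOn ℝ ∞ ((fun v : E5 × E5 => g1 v.1 v.2) ∘ peB) U2 :=
    cdOn_g1V.comp peB.contDiff.contDiffOn Set.inter_subset_right
  exact (hA.sub hB).congr fun q _ => rfl

lemma cdOn_Fg2 : ContDiffOn ℝ ∞ (fun q : (E5 × E5) × E5 => g2 q.1.1 q.2 - g2 q.1.2 q.2) U2 := by
  have hA : ContDiffOn ℝ ∞ ((fun v : E5 × E5 => g2 v.1 v.2) ∘ peA) U2 :=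
    cdOn_g2V.comp peA.contDiff.contDiffOn Set.inter_subset_left
  have hB : ContDiffOn ℝ ∞ ((fun v : E5 × E5 => g2 v.1 v.2) ∘ peB) U2 :=
    cdOn_g2V.comp peB.contDiff.contDiffOn Set.inter_subset_right
  exact (hA.sub hB).congr fun q _ => rfl

lemma cdOn_Fh1 (j : Fin 5) :
    ContDiffOn ℝ ∞ (fun q : (E5 × E5) × E5 => h1 q.1.1 j q.2 - h1 q.1.2 j q.2) U2 := by
  have hA : ContDiffOn ℝ ∞ ((dpj j psiV) ∘ peA) U2 :=
    (cdOn_dpj isOpen_V2 cdOn_psiV j).comp peA.contDiff.contDiffOn Set.inter_subset_left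
  have hB : ContDiffOn ℝ ∞ ((dpj j psiV) ∘ peB) U2 :=
    (cdOn_dpj isOpen_V2 cdOn_psiV j).comp peB.contDiff.contDiffOn Set.inter_subset_right
  apply (hA.sub hB).congr
  intro q hq
  have e1 : h1 q.1.1 j q.2 = dpj j psiV (q.1.1, q.2) := h1_rep hq.1 j
  have e2 : h1 q.1.2 j q.2 = dpj j psiV (q.1.2, q.2) := h1_rep hq.2 j
  rw [e1, e2]
  rfl

lemma cdOn_Fh2 (j : Fin 5) :
    ContDiffOn ℝ ∞ (fun q : (E5 × E5) × E5 => h2 q.1.1 j q.2 - h2 q.1.2 j q.2) U2 := by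
  have hA : ContDiffOn ℝ ∞ ((dpj j W2) ∘ peA) U2 :=
    (cdOn_dpj isOpen_V2 cdOn_W2 j).comp peA.contDiff.contDiffOn Set.inter_subset_left
  have hB : ContDiffOn ℝ ∞ ((dpj j W2) ∘ peB) U2 :=
    (cdOn_dpj isOpen_V2 cdOn_W2 j).comp peB.contDiff.contDiffOn Set.inter_subset_right
  apply (hA.sub hB).congr
  intro q hq
  have e1 : h2 q.1.1 j q.2 = dpj j W2 (q.1.1, q.2) := h2_rep hq.1 j
  have e2 : h2 q.1.2 j q.2 = dpj j W2 (q.1.2, q.2) := h2_rep hq.2 j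
  rw [e1, e2]
  rfl

lemma sqrt_combine {a b L1 L2 x : ℝ} (hx : 0 ≤ x) (hL1 : 0 < L1) (hL2 : 0 < L2)
    (ha : a ≤ L1 * x ^ 2) (hb : b ≤ L2 * x ^ 2) :
    Real.sqrt (a + b) ≤ Real.sqrt (L1 + L2) * x := by
  calc Real.sqrt (a + b) ≤ Real.sqrt ((L1 + L2) * x ^ 2) := by
        apply Real.sqrt_le_sqrt
        nlinarith
  _ = Real.sqrt (L1 + L2) * x := by
      rw [Real.sqrt_mul (by positivity), Real.sqrt_sq hx]


/-- Lipschitz estimate (from Lemma 7.1 / nonlinearestimates2):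
`‖g_α − g_β‖ + ‖h_{α,j} − h_{β,j}‖ ≤ C|α − β|` for small `α, β`, in the
`H³(B⁵) × H²(B⁵)` norm. -/
theorem stmt_17 :
    ∃ δ C : ℝ, 0 < δ ∧ 0 < C ∧
      ∀ α β : E5, ‖α‖ ≤ δ → ‖β‖ ≤ δ → ∀ j : Fin 5,
        Real.sqrt (HSqR 3 (fun ξ => g1 α ξ - g1 β ξ) + HSqR 2 (fun ξ => g2 α ξ - g2 β ξ)) +
            Real.sqrt (HSqR 3 (fun ξ => h1 α j ξ - h1 β j ξ) +
              HSqR 2 (fun ξ => h2 α j ξ - h2 β j ξ)) ≤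
          C * ‖α - β‖ := by

  obtain ⟨L1, hL1pos, hL1⟩ := main_bound cdOn_Fg1 (fun γ ξ => sub_self _) 3
  obtain ⟨L2, hL2pos, hL2⟩ := main_bound cdOn_Fg2 (fun γ ξ => sub_self _) 2
  have Hh1 := fun j : Fin 5 => main_bound (cdOn_Fh1 j) (fun γ ξ => sub_self _) 3
  have Hh2 := fun j : Fin 5 => main_bound (cdOn_Fh2 j) (fun γ ξ => sub_self _) 2
  choose M1 hM1pos hM1 using Hh1
  choose M2 hM2pos hM2 using Hh2
  refine ⟨1/20, Real.sqrt (L1 + L2) + (∑ j : Fin 5, Real.sqrt (M1 j + M2 j)) + 1,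
    by norm_num, ?_, ?_⟩
  · have h1 : 0 ≤ Real.sqrt (L1 + L2) := Real.sqrt_nonneg _
    have h2 : 0 ≤ ∑ j : Fin 5, Real.sqrt (M1 j + M2 j) :=
      Finset.sum_nonneg fun j _ => Real.sqrt_nonneg _
    linarith
  intro α β ha hb j
  have hx : (0:ℝ) ≤ ‖α - β‖ := norm_nonneg _
  have e1 : Real.sqrt (HSqR 3 (fun ξ => g1 α ξ - g1 β ξ) +
      HSqR 2 (fun ξ => g2 α ξ - g2 β ξ)) ≤ Real.sqrt (L1 + L2) * ‖α - β‖ :=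
    sqrt_combine hx hL1pos hL2pos (hL1 α β ha hb) (hL2 α β ha hb)
  have e2 : Real.sqrt (HSqR 3 (fun ξ => h1 α j ξ - h1 β j ξ) +
      HSqR 2 (fun ξ => h2 α j ξ - h2 β j ξ)) ≤ Real.sqrt (M1 j + M2 j) * ‖α - β‖ :=
    sqrt_combine hx (hM1pos j) (hM2pos j) (hM1 j α β ha hb) (hM2 j α β ha hb)
  have e3 : Real.sqrt (M1 j + M2 j) ≤ ∑ j' : Fin 5, Real.sqrt (M1 j' + M2 j') :=
    Finset.single_le_sum (f := fun j' => Real.sqrt (M1 j' + M2 j'))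
      (fun j' _ => Real.sqrt_nonneg _) (Finset.mem_univ j)
  calc Real.sqrt (HSqR 3 (fun ξ => g1 α ξ - g1 β ξ) + HSqR 2 (fun ξ => g2 α ξ - g2 β ξ)) +
        Real.sqrt (HSqR 3 (fun ξ => h1 α j ξ - h1 β j ξ) +
          HSqR 2 (fun ξ => h2 α j ξ - h2 β j ξ))
      ≤ Real.sqrt (L1 + L2) * ‖α - β‖ + Real.sqrt (M1 j + M2 j) * ‖α - β‖ := add_le_add e1 e2
  _ ≤ (Real.sqrt (L1 + L2) + (∑ j' : Fin 5, Real.sqrt (M1 j' + M2 j')) + 1) * ‖α - β‖ := by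
      have := mul_le_mul_of_nonneg_right e3 hx
      nlinarith [Real.sqrt_nonneg (L1 + L2), Real.sqrt_nonneg (M1 j + M2 j)]

end
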